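/- Let X₁ be a real Banach space and X₂ a normed real vector space. Let S : X₁ → X₂ be a continuous linear map and L : X₂ → X₁ a linear map with L(S f) = f for all f ∈ X₁. Let Q : X₂ → X₁ be a map with Q(0) = 0, and suppose there exist constants r₀ > 0 and λ ≥ 0 with λ‖S‖ < 1/2 such that ‖Q(S f₁) − Q(S f₂)‖_{X₁} ≤ λ‖S f₁ − S f₂‖_{X₂} whenever ‖f₁‖_{X₁} < r₀ and ‖f₂‖_{X₁} < r₀. Then for every f ∈ X₁ with ‖f‖_{X₁} < r₀/4 there exists f′ ∈ X₁ with ‖f′‖_{X₁} < r₀ such that the element h = S f′ ∈ X₂ satisfies L h + Q(h) = f. -/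
import Mathlib


/-- Abstract Picard iteration scheme for the nonlinear constraint equation:
`S` is the (continuous linear) solution operator of the linearized problem,
`L` is a linear left quasi-inverse (`L (S f) = f`), and `Q` is a quadratic
remainder with `Q 0 = 0` satisfying a Lipschitz smallness condition on images of
small balls. Then for every sufficiently small `f` there is `f'` with `‖f'‖ < r₀`
such that `h = S f'` solves `L h + Q h = f`. -/
theorem picard_scheme
    (X₁ X₂ : Type*) [NormedAddCommGroup X₁] [NormedSpace ℝ X₁] [CompleteSpace X₁]
    [NormedAddCommGroup X₂] [NormedSpace ℝ X₂]
    (S : X₁ →L[ℝ] X₂) (L : X₂ →ₗ[ℝ] X₁)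
    (hLS : ∀ f : X₁, L (S f) = f)
    (Q : X₂ → X₁) (hQ0 : Q 0 = 0)
    (r₀ lam : ℝ) (hr₀ : 0 < r₀) (hlam : 0 ≤ lam) (hsmall : lam * ‖S‖ < 1 / 2)
    (hLip : ∀ f₁ f₂ : X₁, ‖f₁‖ < r₀ → ‖f₂‖ < r₀ →
      ‖Q (S f₁) - Q (S f₂)‖ ≤ lam * ‖S f₁ - S f₂‖) :
    ∀ f : X₁, ‖f‖ < r₀ / 4 →
      ∃ f' : X₁, ‖f'‖ < r₀ ∧ L (S f') + Q (S f') = f := by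
  intro f hf
  set c : ℝ := r₀ / 2 with hc
  have hc0 : 0 ≤ c := by positivity
  have hcr : c < r₀ := by linarith
  have hK0 : 0 ≤ lam * ‖S‖ := mul_nonneg hlam (norm_nonneg _)
  -- bound for Q on images of the ball
  have hQbound : ∀ g : X₁, ‖g‖ < r₀ → ‖Q (S g)‖ ≤ lam * ‖S‖ * ‖g‖ := by
    intro g hg
    have h0 : ‖(0 : X₁)‖ < r₀ := by simpa using hr₀
    have := hLip g 0 hg h0
    simp only [map_zero, hQ0, sub_zero] at this
    calc ‖Q (S g)‖ ≤ lam * ‖S g‖ := this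
      _ ≤ lam * (‖S‖ * ‖g‖) := by
          exact mul_le_mul_of_nonneg_left (S.le_opNorm g) hlam
      _ = lam * ‖S‖ * ‖g‖ := by ring
  -- the Picard map on the closed ball
  have hmem : ∀ g : X₁, g ∈ Metric.closedBall (0 : X₁) c →
      f - Q (S g) ∈ Metric.closedBall (0 : X₁) c := by
    intro g hg
    rw [Metric.mem_closedBall, dist_zero_right] at hg ⊢
    have hgr : ‖g‖ < r₀ := lt_of_le_of_lt hg hcr
    have h1 : ‖Q (S g)‖ ≤ lam * ‖S‖ * ‖g‖ := hQbound g hgr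
    have h2 : lam * ‖S‖ * ‖g‖ ≤ (1 / 2) * c := by
      apply mul_le_mul (le_of_lt hsmall) hg (norm_nonneg _) (by norm_num)
    calc ‖f - Q (S g)‖ ≤ ‖f‖ + ‖Q (S g)‖ := norm_sub_le _ _
      _ ≤ r₀ / 4 + (1 / 2) * c := by linarith
      _ ≤ c := by rw [hc]; linarith
  set T : Metric.closedBall (0 : X₁) c → Metric.closedBall (0 : X₁) c :=
    fun g => ⟨f - Q (S g.1), hmem g.1 g.2⟩ with hT
  haveI : CompleteSpace (Metric.closedBall (0 : X₁) c) :=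
    Metric.isClosed_closedBall.completeSpace_coe
  haveI : Nonempty (Metric.closedBall (0 : X₁) c) :=
    ⟨⟨0, Metric.mem_closedBall_self hc0⟩⟩
  have hcontr : ContractingWith (Real.toNNReal (lam * ‖S‖)) T := by
    constructor
    · have : (Real.toNNReal (lam * ‖S‖) : ℝ) < 1 := by
        rw [Real.coe_toNNReal _ hK0]; linarith
      exact_mod_cast this
    · rw [lipschitzWith_iff_dist_le_mul]
      intro g₁ g₂
      have hg₁ : ‖(g₁ : X₁)‖ < r₀ := by
        have := g₁.2; rw [Metric.mem_closedBall, dist_zero_right] at this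
        exact lt_of_le_of_lt this hcr
      have hg₂ : ‖(g₂ : X₁)‖ < r₀ := by
        have := g₂.2; rw [Metric.mem_closedBall, dist_zero_right] at this
        exact lt_of_le_of_lt this hcr
      have hd : dist (T g₁) (T g₂) = ‖Q (S g₂.1) - Q (S g₁.1)‖ := by
        rw [Subtype.dist_eq, dist_eq_norm]
        congr 1
        show (f - Q (S g₁.1)) - (f - Q (S g₂.1)) = _
        abel
      rw [hd, Real.coe_toNNReal _ hK0]
      calc ‖Q (S g₂.1) - Q (S g₁.1)‖ ≤ lam * ‖S g₂.1 - S g₁.1‖ :=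
            hLip g₂.1 g₁.1 hg₂ hg₁
        _ = lam * ‖S (g₂.1 - g₁.1)‖ := by rw [map_sub]
        _ ≤ lam * (‖S‖ * ‖g₂.1 - g₁.1‖) :=
            mul_le_mul_of_nonneg_left (S.le_opNorm _) hlam
        _ = lam * ‖S‖ * dist g₁ g₂ := by
            rw [Subtype.dist_eq, dist_eq_norm, norm_sub_rev (g₂.1 : X₁)]
            ring
  obtain ⟨x, hx⟩ : ∃ x, Function.IsFixedPt T x :=
    ⟨ContractingWith.fixedPoint T hcontr, ContractingWith.fixedPoint_isFixedPt hcontr⟩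
  refine ⟨x.1, ?_, ?_⟩
  · have := x.2; rw [Metric.mem_closedBall, dist_zero_right] at this
    exact lt_of_le_of_lt this hcr
  · have hx' : f - Q (S x.1) = x.1 := congrArg Subtype.val hx
    rw [hLS]
    exact eq_sub_iff_add_eq.mp hx'.symm
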